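/- Let D ⊆ ℂ^N be a convex domain. The following are equivalent: (1) D is biholomorphic to a bounded domain in ℂ^N; (2) every holomorphic map from ℂ to D is constant (D contains no nonconstant entire curves); (3) D contains no complex affine line; (4) there exist ℂ-linearly independent complex linear functionals L_1, …, L_N : ℂ^N → ℂ and real numbers a_1, …, a_N such that D ⊆ {z ∈ ℂ^N : Re L_j(z) > a_j for all j = 1, …, N} (D has N linearly independent separating real hyperplanes). -/

import Mathlib

/-- A convex domain in `ℂ^N`: a nonempty open convex subset. -/
def IsConvexDomain {N : ℕ} (D : Set (Fin N → ℂ)) : Prop :=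
  IsOpen D ∧ Convex ℝ D ∧ D.Nonempty

/-- `S` contains a complex affine line `{p + ζ • v : ζ ∈ ℂ}` with `v ≠ 0`. -/
def ContainsComplexLine {E : Type*} [AddCommGroup E] [Module ℂ E] (S : Set E) : Prop :=
  ∃ p v : E, v ≠ 0 ∧ ∀ ζ : ℂ, p + ζ • v ∈ S

/-- `D` is biholomorphic to a bounded domain in `ℂ^N`: there is a bounded nonempty open
set `U` and a holomorphic bijection `F : D → U` with holomorphic inverse. -/
def BiholToBounded {N : ℕ} (D : Set (Fin N → ℂ)) : Prop :=
  ∃ (U : Set (Fin N → ℂ)) (F G : (Fin N → ℂ) → (Fin N → ℂ)),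
    IsOpen U ∧ U.Nonempty ∧ Bornology.IsBounded U ∧
    DifferentiableOn ℂ F D ∧ F '' D = U ∧
    DifferentiableOn ℂ G U ∧ (∀ z ∈ D, G (F z) = z) ∧ (∀ w ∈ U, F (G w) = w)

/-- `D` has `N` linearly independent separating real hyperplanes. -/
def HasSeparatingHyperplanes {N : ℕ} (D : Set (Fin N → ℂ)) : Prop :=
  ∃ (L : Fin N → ((Fin N → ℂ) →ₗ[ℂ] ℂ)) (a : Fin N → ℝ),
    LinearIndependent ℂ L ∧ ∀ z ∈ D, ∀ j, a j < ((L j) z).re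

section Aux

variable {N : ℕ}

/-- (3) → (4): if a convex domain contains no complex affine line, it has `N` linearly
independent separating hyperplanes. -/
theorem aux_no_line_imp_hyperplanes (D : Set (Fin N → ℂ)) (hD : IsConvexDomain D)
    (h3 : ¬ ContainsComplexLine D) : HasSeparatingHyperplanes D := by
  obtain ⟨hDo, hDc, p, hp⟩ := hD
  -- the set of functionals whose real part is bounded below on D
  set K : Set (Module.Dual ℂ (Fin N → ℂ)) :=
    {L | ∃ a : ℝ, ∀ z ∈ D, a < (L z).re} with hKdef
  -- K spans the dual space
  have hspan : Submodule.span ℂ K = ⊤ := by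
    by_contra hW
    -- find a nonzero vector annihilated by all of K
    have hco : (Submodule.span ℂ K).dualCoannihilator ≠ ⊥ := by
      intro hbot
      apply hW
      have h1 := Subspace.finrank_add_finrank_dualCoannihilator_eq (Submodule.span ℂ K)
      rw [hbot, finrank_bot, add_zero] at h1
      refine Submodule.eq_top_of_finrank_eq ?_
      rw [h1, Subspace.dual_finrank_eq]
    obtain ⟨v, hvmem, hv0⟩ := Submodule.ne_bot_iff _ |>.mp hco
    apply h3
    refine ⟨p, v, hv0, fun ζ => ?_⟩
    by_contra hq
    obtain ⟨f, hf⟩ := geometric_hahn_banach_point_open hDc hDo hq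
    -- complexify f
    set Lf : (Fin N → ℂ) →ₗ[ℂ] ℂ := LinearMap.extendTo𝕜' (f : (Fin N → ℂ) →ₗ[ℝ] ℝ) with hLf
    have hre : ∀ z, (Lf z).re = f z := fun z => by
      rw [← RCLike.re_to_complex]
      exact LinearMap.extendTo𝕜'_apply_re _ z
    have hLfK : Lf ∈ K := ⟨f (p + ζ • v), fun z hz => by rw [hre]; exact hf z hz⟩
    have hLfv : Lf v = 0 :=
      (Submodule.mem_dualCoannihilator v).mp hvmem Lf (Submodule.subset_span hLfK)
    have hfp : f (p + ζ • v) < f p := hf p hp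
    have hfzv : f (ζ • v) = 0 := by
      rw [← hre, map_smul, hLfv, smul_zero, Complex.zero_re]
    rw [map_add, hfzv, add_zero] at hfp
    exact lt_irrefl _ hfp
  -- extract a basis from K
  obtain ⟨b, hbK, hbspan, hbli⟩ := exists_linearIndependent ℂ K
  rw [hspan] at hbspan
  let B : Module.Basis b ℂ (Module.Dual ℂ (Fin N → ℂ)) :=
    Module.Basis.mk hbli (by rw [Subtype.range_coe, hbspan])
  have : Fintype b := FiniteDimensional.fintypeBasisIndex B
  have hcard : Fintype.card b = N := by
    rw [← Module.finrank_eq_card_basis B, Subspace.dual_finrank_eq]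
    exact Module.finrank_fin_fun ℂ
  let e : Fin N ≃ b := (Fintype.equivFinOfCardEq hcard).symm
  have hKa : ∀ x : b, ∃ a : ℝ, ∀ z ∈ D, a < ((x : Module.Dual ℂ (Fin N → ℂ)) z).re :=
    fun x => hbK x.2
  choose A hA using hKa
  refine ⟨fun j => (e j : Module.Dual ℂ (Fin N → ℂ)), fun j => A (e j), ?_, ?_⟩
  · exact hbli.comp e e.injective
  · exact fun z hz j => hA (e j) z hz

/-- (4) → (1): separating hyperplanes give a biholomorphism onto a bounded domain. -/
theorem aux_hyperplanes_imp_bihol (D : Set (Fin N → ℂ)) (hD : IsConvexDomain D)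
    (h4 : HasSeparatingHyperplanes D) : BiholToBounded D := by
  obtain ⟨L, a, hLi, hLa⟩ := h4
  set T : (Fin N → ℂ) →ₗ[ℂ] (Fin N → ℂ) := LinearMap.pi L with hT
  -- T is bijective
  have hinj : Function.Injective T := by
    rw [← LinearMap.ker_eq_bot, Submodule.eq_bot_iff]
    intro z hz
    rw [LinearMap.mem_ker] at hz
    have hzj : ∀ j, L j z = 0 := fun j => congrFun hz j
    have hall : ∀ φ : Module.Dual ℂ (Fin N → ℂ), φ z = 0 := by
      have hsp : Submodule.span ℂ (Set.range L) = ⊤ := by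
        refine Submodule.eq_top_of_finrank_eq ?_
        rw [finrank_span_eq_card hLi, Subspace.dual_finrank_eq,
          Module.finrank_fin_fun ℂ, Fintype.card_fin]
      intro φ
      have hφ : φ ∈ Submodule.span ℂ (Set.range L) := by rw [hsp]; trivial
      induction hφ using Submodule.span_induction with
      | mem ψ hψ => obtain ⟨j, rfl⟩ := hψ; exact hzj j
      | zero => rfl
      | add ψ χ _ _ h1 h2 => rw [LinearMap.add_apply, h1, h2, add_zero]
      | smul c ψ _ h1 => rw [LinearMap.smul_apply, h1, smul_zero]
    exact (Module.forall_dual_apply_eq_zero_iff ℂ z).mp hall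
  have hsurj : Function.Surjective T := (LinearMap.injective_iff_surjective).mp hinj
  set E : (Fin N → ℂ) ≃ₗ[ℂ] (Fin N → ℂ) := LinearEquiv.ofBijective T ⟨hinj, hsurj⟩ with hE
  have hET : ∀ z, E z = T z := fun _ => rfl
  -- the biholomorphism
  set F : (Fin N → ℂ) → (Fin N → ℂ) := fun z j => (L j z - (a j : ℂ) + 1)⁻¹ with hF
  set G : (Fin N → ℂ) → (Fin N → ℂ) :=
    fun w => E.symm (fun j => (w j)⁻¹ + (a j : ℂ) - 1) with hG
  have hd1 : ∀ z ∈ D, ∀ j, 1 ≤ (L j z - (a j : ℂ) + 1).re := by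
    intro z hz j
    have := hLa z hz j
    simp only [Complex.add_re, Complex.sub_re, Complex.ofReal_re, Complex.one_re]
    linarith
  have hdne : ∀ z ∈ D, ∀ j, L j z - (a j : ℂ) + 1 ≠ 0 := by
    intro z hz j h
    have := hd1 z hz j
    rw [h, Complex.zero_re] at this
    linarith
  have hGF : ∀ z ∈ D, G (F z) = z := by
    intro z hz
    have h1 : (fun j => ((F z) j)⁻¹ + (a j : ℂ) - 1) = T z := by
      funext j
      simp only [hF, inv_inv]
      rw [hT, LinearMap.pi_apply]
      ring
    show E.symm (fun j => ((F z) j)⁻¹ + (a j : ℂ) - 1) = z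
    rw [h1, ← hET, E.symm_apply_apply]
  have hFG : ∀ w j, w j ≠ 0 → F (G w) j = w j := by
    intro w j hwj
    have hTG : T (G w) = fun j => (w j)⁻¹ + (a j : ℂ) - 1 := by
      rw [hG, ← hET, E.apply_symm_apply]
    have hLG : L j (G w) = (w j)⁻¹ + (a j : ℂ) - 1 := by
      rw [← LinearMap.pi_apply (f := L), ← hT, hTG]
    rw [hF]
    simp only [hLG]
    have : (w j)⁻¹ + (a j : ℂ) - 1 - (a j : ℂ) + 1 = (w j)⁻¹ := by ring
    rw [this, inv_inv]
  have hFGmem : ∀ w, (∀ j, w j ≠ 0) → F (G w) = w := by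
    intro w hw; funext j; exact hFG w j (hw j)
  set O : Set (Fin N → ℂ) := {w | ∀ j, w j ≠ 0} with hO
  have hUchar : F '' D = O ∩ G ⁻¹' D := by
    ext w
    constructor
    · rintro ⟨z, hz, rfl⟩
      have hwj : ∀ j, F z j ≠ 0 := fun j => inv_ne_zero (hdne z hz j)
      exact ⟨hwj, by rw [Set.mem_preimage, hGF z hz]; exact hz⟩
    · rintro ⟨hwO, hwG⟩
      exact ⟨G w, hwG, hFGmem w hwO⟩
  have hOopen : IsOpen O := by
    have : O = ⋂ j, (fun w : Fin N → ℂ => w j) ⁻¹' {0}ᶜ := by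
      ext w; simp [hO]
    rw [this]
    exact isOpen_iInter_of_finite fun j =>
      (continuous_apply j).isOpen_preimage _ isOpen_compl_singleton
  have hGcont : ContinuousOn G O := by
    refine (E.symm.toLinearMap.toContinuousLinearMap.continuous).comp_continuousOn ?_
    refine continuousOn_pi.mpr fun j => ?_
    refine ContinuousOn.sub (ContinuousOn.add ?_ continuousOn_const) continuousOn_const
    exact ((continuous_apply j).continuousOn).inv₀ fun w hw => hw j
  have hUopen : IsOpen (F '' D) := by
    rw [hUchar]
    exact hGcont.isOpen_inter_preimage hOopen hD.1
  have hUbdd : Bornology.IsBounded (F '' D) := by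
    refine (Metric.isBounded_closedBall (x := (0 : Fin N → ℂ)) (r := 1)).subset ?_
    rintro _ ⟨z, hz, rfl⟩
    rw [Metric.mem_closedBall, dist_zero_right]
    rw [pi_norm_le_iff_of_nonneg zero_le_one]
    intro j
    rw [hF]
    rw [norm_inv]
    have h1 : (1 : ℝ) ≤ ‖L j z - (a j : ℂ) + 1‖ :=
      le_trans (hd1 z hz j) (Complex.re_le_norm _)
    rw [inv_le_one_iff₀]
    right
    exact h1
  have hFdiff : DifferentiableOn ℂ F D := by
    rw [hF]
    refine differentiableOn_pi.mpr fun j => ?_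
    refine DifferentiableOn.inv ?_ fun z hz => hdne z hz j
    refine DifferentiableOn.add_const 1 ?_
    refine DifferentiableOn.sub_const ?_ _
    exact ((L j).toContinuousLinearMap.differentiable).differentiableOn
  have hGdiff : DifferentiableOn ℂ G (F '' D) := by
    have hsub : F '' D ⊆ O := by rw [hUchar]; exact Set.inter_subset_left
    refine DifferentiableOn.mono ?_ hsub
    rw [hG]
    refine (E.symm.toLinearMap.toContinuousLinearMap.differentiable).comp_differentiableOn ?_
    refine differentiableOn_pi.mpr fun j => ?_
    have hproj : Differentiable ℂ (fun w : Fin N → ℂ => w j) :=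
      (ContinuousLinearMap.proj j : (Fin N → ℂ) →L[ℂ] ℂ).differentiable
    exact (((hproj.differentiableOn.inv
      (fun w (hw : ∀ i, w i ≠ 0) => hw j)).add_const _).sub_const _)
  refine ⟨F '' D, F, G, hUopen, hD.2.2.image F, hUbdd, hFdiff, rfl, hGdiff, hGF, ?_⟩
  intro w hw
  rw [hUchar] at hw
  exact hFGmem w hw.1

end Aux

/-- conditions (1), (5), (6), (7) of Theorem 1.1:
for a convex domain `D ⊆ ℂ^N` the following are equivalent:
(1) `D` is biholomorphic to a bounded domain;
(2) every holomorphic map `ℂ → D` is constant;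
(3) `D` contains no complex affine line;
(4) `D` has `N` linearly independent separating real hyperplanes. -/
theorem convex_domain_hyperbolicity_tfae {N : ℕ} (D : Set (Fin N → ℂ))
    (hD : IsConvexDomain D) :
    List.TFAE
      [BiholToBounded D,
       ∀ f : ℂ → (Fin N → ℂ), Differentiable ℂ f → (∀ ζ, f ζ ∈ D) →
         ∀ ζ ζ' : ℂ, f ζ = f ζ',
       ¬ ContainsComplexLine D,
       HasSeparatingHyperplanes D] := by
  tfae_have 1 → 2 := by
    rintro ⟨U, F, G, hUo, hUne, hUb, hF, hFD, hG, hGF, hFG⟩ f hf hfD ζ ζ'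
    set g : ℂ → (Fin N → ℂ) := fun ζ => F (f ζ) with hg
    have hgd : Differentiable ℂ g := fun w =>
      (hF.differentiableAt (hD.1.mem_nhds (hfD w))).comp w (hf w)
    have hgb : Bornology.IsBounded (Set.range g) := by
      refine hUb.subset ?_
      rintro _ ⟨w, rfl⟩
      rw [← hFD]
      exact ⟨f w, hfD w, rfl⟩
    have hgg : g ζ = g ζ' := hgd.apply_eq_apply_of_bounded hgb ζ ζ'
    calc f ζ = G (F (f ζ)) := (hGF _ (hfD ζ)).symm
    _ = G (F (f ζ')) := congrArg G hgg
    _ = f ζ' := hGF _ (hfD ζ')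
  tfae_have 2 → 3 := by
    rintro h2 ⟨p, v, hv, hline⟩
    have hdiff : Differentiable ℂ (fun ζ : ℂ => p + ζ • v) :=
      (differentiable_const p).add (differentiable_id.smul_const v)
    have h01 : p + (0 : ℂ) • v = p + (1 : ℂ) • v := h2 _ hdiff hline 0 1
    rw [zero_smul, one_smul, add_zero] at h01
    exact hv (left_eq_add.mp h01)
  tfae_have 3 → 4 := aux_no_line_imp_hyperplanes D hD
  tfae_have 4 → 1 := aux_hyperplanes_imp_bihol D hD
  tfae_finish
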